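/- Let K ≥ 1, T > 0, δ_1, …, δ_K ≥ 0, and let ξ : [0,T] → ℝ^K be continuous. Define the map Λ on the space of continuous functions Y : [0,T] → ℝ^K by Λ(Y)_i(t) = ξ_i(t) − ∫₀ᵗ δ_i Y_i(s) ds − R_Y(t), where R_Y(t) = min_{1≤j≤K} ( ξ_j(t) − ∫₀ᵗ δ_j Y_j(s) ds ). Then for any two continuous Y⁽¹⁾, Y⁽²⁾ : [0,T] → ℝ^K, sup_{t∈[0,T]} ‖Λ(Y⁽¹⁾)(t) − Λ(Y⁽²⁾)(t)‖ ≤ (1+K)·√K·(max_{1≤j≤K} δ_j)·T · sup_{t∈[0,T]} ‖Y⁽¹⁾(t) − Y⁽²⁾(t)‖, where ‖·‖ is the Euclidean norm on ℝ^K. -/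

import Mathlib

open MeasureTheory

/-- The map `Λ` defining the coupled integral equation. -/
noncomputable def couplingMap (K : ℕ) (hK : 0 < K) (δ : Fin K → ℝ)
    (ξ Y : ℝ → Fin K → ℝ) : ℝ → Fin K → ℝ := fun t i =>
  ξ t i - (∫ s in (0 : ℝ)..t, δ i * Y s i) -
    Finset.univ.inf' (Finset.univ_nonempty_iff.mpr (Fin.pos_iff_nonempty.mp hK))
      (fun j => ξ t j - ∫ s in (0 : ℝ)..t, δ j * Y s j)

theorem stmt_5 (K : ℕ) (hK : 0 < K) (T : ℝ) (hT : 0 < T)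
    (δ : Fin K → ℝ) (hδ : ∀ j, 0 ≤ δ j)
    (ξ Y₁ Y₂ : ℝ → Fin K → ℝ)
    (hξ : ∀ j, ContinuousOn (fun t => ξ t j) (Set.Icc 0 T))
    (hY₁ : ∀ j, ContinuousOn (fun t => Y₁ t j) (Set.Icc 0 T))
    (hY₂ : ∀ j, ContinuousOn (fun t => Y₂ t j) (Set.Icc 0 T)) :
    (⨆ t : Set.Icc (0 : ℝ) T,
        Real.sqrt (∑ i, (couplingMap K hK δ ξ Y₁ (t : ℝ) i -
          couplingMap K hK δ ξ Y₂ (t : ℝ) i) ^ 2)) ≤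
      (1 + (K : ℝ)) * Real.sqrt K *
        (Finset.univ.sup' (Finset.univ_nonempty_iff.mpr (Fin.pos_iff_nonempty.mp hK)) δ) * T *
      ⨆ t : Set.Icc (0 : ℝ) T,
        Real.sqrt (∑ i, (Y₁ (t : ℝ) i - Y₂ (t : ℝ) i) ^ 2) := by
  have hne : (Finset.univ : Finset (Fin K)).Nonempty :=
    Finset.univ_nonempty_iff.mpr (Fin.pos_iff_nonempty.mp hK)
  set C : ℝ := Finset.univ.sup' hne δ with hCdef
  have hC0 : 0 ≤ C := le_trans (hδ ⟨0, hK⟩) (Finset.le_sup' δ (Finset.mem_univ _))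
  have hCj : ∀ j, δ j ≤ C := fun j => Finset.le_sup' δ (Finset.mem_univ j)
  set M : ℝ := ⨆ t : Set.Icc (0 : ℝ) T,
      Real.sqrt (∑ i, (Y₁ (t : ℝ) i - Y₂ (t : ℝ) i) ^ 2) with hMdef
  -- boundedness of the sup defining M
  have hcontM : ContinuousOn (fun t => Real.sqrt (∑ i, (Y₁ t i - Y₂ t i) ^ 2))
      (Set.Icc (0:ℝ) T) := by
    apply Real.continuous_sqrt.comp_continuousOn
    apply continuousOn_finset_sum
    intro i _
    exact ((hY₁ i).sub (hY₂ i)).pow 2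
  have hbdd : BddAbove (Set.range (fun t : Set.Icc (0:ℝ) T =>
      Real.sqrt (∑ i, (Y₁ (t : ℝ) i - Y₂ (t : ℝ) i) ^ 2))) := by
    have := (isCompact_Icc.image_of_continuousOn hcontM).bddAbove
    rwa [show (fun t : Set.Icc (0:ℝ) T =>
        Real.sqrt (∑ i, (Y₁ (t : ℝ) i - Y₂ (t : ℝ) i) ^ 2)) =
        (Set.Icc (0:ℝ) T).domRestrict (fun t => Real.sqrt (∑ i, (Y₁ t i - Y₂ t i) ^ 2)) from rfl,
      Set.range_restrict]
  have hM : ∀ t ∈ Set.Icc (0:ℝ) T,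
      Real.sqrt (∑ i, (Y₁ t i - Y₂ t i) ^ 2) ≤ M := by
    intro t ht
    exact le_ciSup hbdd (⟨t, ht⟩ : Set.Icc (0:ℝ) T)
  have h0mem : (0:ℝ) ∈ Set.Icc (0:ℝ) T := ⟨le_rfl, hT.le⟩
  have hM0 : 0 ≤ M := le_trans (Real.sqrt_nonneg _) (hM 0 h0mem)
  have hptwise : ∀ t ∈ Set.Icc (0:ℝ) T, ∀ j, |Y₁ t j - Y₂ t j| ≤ M := by
    intro t ht j
    have h1 : |Y₁ t j - Y₂ t j| = Real.sqrt ((Y₁ t j - Y₂ t j) ^ 2) :=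
      (Real.sqrt_sq_eq_abs _).symm
    rw [h1]
    refine le_trans (Real.sqrt_le_sqrt ?_) (hM t ht)
    exact Finset.single_le_sum (f := fun i => (Y₁ t i - Y₂ t i) ^ 2)
      (fun i _ => sq_nonneg _) (Finset.mem_univ j)
  -- key integral bound
  have key : ∀ t ∈ Set.Icc (0:ℝ) T, ∀ j,
      |(∫ s in (0:ℝ)..t, δ j * Y₁ s j) - ∫ s in (0:ℝ)..t, δ j * Y₂ s j| ≤ C * M * T := by
    intro t ht j
    have hsub : Set.uIcc (0:ℝ) t ⊆ Set.Icc (0:ℝ) T := by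
      rw [Set.uIcc_of_le ht.1]
      exact Set.Icc_subset_Icc le_rfl ht.2
    have hint1 : IntervalIntegrable (fun s => δ j * Y₁ s j) volume 0 t :=
      (continuousOn_const.mul ((hY₁ j).mono hsub)).intervalIntegrable
    have hint2 : IntervalIntegrable (fun s => δ j * Y₂ s j) volume 0 t :=
      (continuousOn_const.mul ((hY₂ j).mono hsub)).intervalIntegrable
    rw [← intervalIntegral.integral_sub hint1 hint2]
    have hb : ∀ x ∈ Set.uIoc (0:ℝ) t, ‖δ j * Y₁ x j - δ j * Y₂ x j‖ ≤ C * M := by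
      intro x hx
      have hxmem : x ∈ Set.Icc (0:ℝ) T := by
        have : x ∈ Set.uIcc (0:ℝ) t := Set.uIoc_subset_uIcc hx
        exact hsub this
      rw [← mul_sub, Real.norm_eq_abs, abs_mul, abs_of_nonneg (hδ j)]
      exact mul_le_mul (hCj j) (hptwise x hxmem j) (abs_nonneg _) hC0
    have := intervalIntegral.norm_integral_le_of_norm_le_const hb
    rw [Real.norm_eq_abs] at this
    refine le_trans this ?_
    rw [sub_zero, abs_of_nonneg ht.1]
    exact mul_le_mul_of_nonneg_left ht.2 (mul_nonneg hC0 hM0)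
  -- inf' difference bound
  have inf_diff : ∀ (f g : Fin K → ℝ) (B : ℝ), (∀ j, |f j - g j| ≤ B) →
      |Finset.univ.inf' hne f - Finset.univ.inf' hne g| ≤ B := by
    intro f g B hB
    rw [abs_sub_le_iff]
    constructor
    · obtain ⟨j, _, hj⟩ := Finset.exists_mem_eq_inf' hne g
      have h1 : Finset.univ.inf' hne f ≤ f j := Finset.inf'_le _ (Finset.mem_univ j)
      have h2 := abs_sub_le_iff.mp (hB j)
      rw [hj]; linarith [h2.1]
    · obtain ⟨j, _, hj⟩ := Finset.exists_mem_eq_inf' hne f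
      have h1 : Finset.univ.inf' hne g ≤ g j := Finset.inf'_le _ (Finset.mem_univ j)
      have h2 := abs_sub_le_iff.mp (hB j)
      rw [hj]; linarith [h2.2]
  -- main bound
  haveI : Nonempty (Set.Icc (0:ℝ) T) := ⟨⟨0, h0mem⟩⟩
  apply ciSup_le
  rintro ⟨t, ht⟩
  simp only
  have hDi : ∀ i, |couplingMap K hK δ ξ Y₁ t i - couplingMap K hK δ ξ Y₂ t i|
      ≤ 2 * (C * M * T) := by
    intro i
    simp only [couplingMap]
    have h1 := key t ht i
    have h2 : |Finset.univ.inf' hne (fun j => ξ t j - ∫ s in (0:ℝ)..t, δ j * Y₁ s j) -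
        Finset.univ.inf' hne (fun j => ξ t j - ∫ s in (0:ℝ)..t, δ j * Y₂ s j)| ≤ C * M * T := by
      apply inf_diff
      intro j
      have : (ξ t j - ∫ s in (0:ℝ)..t, δ j * Y₁ s j) -
          (ξ t j - ∫ s in (0:ℝ)..t, δ j * Y₂ s j) =
          -((∫ s in (0:ℝ)..t, δ j * Y₁ s j) - ∫ s in (0:ℝ)..t, δ j * Y₂ s j) := by ring
      rw [this, abs_neg]
      exact key t ht j
    calc |ξ t i - (∫ s in (0:ℝ)..t, δ i * Y₁ s i) -
            Finset.univ.inf' hne (fun j => ξ t j - ∫ s in (0:ℝ)..t, δ j * Y₁ s j) -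
          (ξ t i - (∫ s in (0:ℝ)..t, δ i * Y₂ s i) -
            Finset.univ.inf' hne (fun j => ξ t j - ∫ s in (0:ℝ)..t, δ j * Y₂ s j))|
        = |(-((∫ s in (0:ℝ)..t, δ i * Y₁ s i) - ∫ s in (0:ℝ)..t, δ i * Y₂ s i)) +
            (-(Finset.univ.inf' hne (fun j => ξ t j - ∫ s in (0:ℝ)..t, δ j * Y₁ s j) -
              Finset.univ.inf' hne (fun j => ξ t j - ∫ s in (0:ℝ)..t, δ j * Y₂ s j)))| := by
          congr 1; ring
      _ ≤ |(-((∫ s in (0:ℝ)..t, δ i * Y₁ s i) - ∫ s in (0:ℝ)..t, δ i * Y₂ s i))| +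
          |(-(Finset.univ.inf' hne (fun j => ξ t j - ∫ s in (0:ℝ)..t, δ j * Y₁ s j) -
            Finset.univ.inf' hne (fun j => ξ t j - ∫ s in (0:ℝ)..t, δ j * Y₂ s j)))| :=
          abs_add_le _ _
      _ ≤ 2 * (C * M * T) := by rw [abs_neg, abs_neg]; linarith
  have hsum : (∑ i, (couplingMap K hK δ ξ Y₁ t i - couplingMap K hK δ ξ Y₂ t i) ^ 2)
      ≤ (K : ℝ) * (2 * (C * M * T)) ^ 2 := by
    calc (∑ i, (couplingMap K hK δ ξ Y₁ t i - couplingMap K hK δ ξ Y₂ t i) ^ 2)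
        ≤ ∑ _i : Fin K, (2 * (C * M * T)) ^ 2 := by
          apply Finset.sum_le_sum
          intro i _
          have := hDi i
          have h := sq_abs (couplingMap K hK δ ξ Y₁ t i - couplingMap K hK δ ξ Y₂ t i)
          nlinarith [abs_nonneg (couplingMap K hK δ ξ Y₁ t i - couplingMap K hK δ ξ Y₂ t i)]
      _ = (K : ℝ) * (2 * (C * M * T)) ^ 2 := by
          rw [Finset.sum_const, Finset.card_univ, Fintype.card_fin, nsmul_eq_mul]
  have hCMT : 0 ≤ 2 * (C * M * T) := by positivity
  have hsqrt : Real.sqrt (∑ i, (couplingMap K hK δ ξ Y₁ t i - couplingMap K hK δ ξ Y₂ t i) ^ 2)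
      ≤ Real.sqrt K * (2 * (C * M * T)) := by
    refine le_trans (Real.sqrt_le_sqrt hsum) ?_
    rw [Real.sqrt_mul (Nat.cast_nonneg K), Real.sqrt_sq hCMT]
  refine le_trans hsqrt ?_
  have hK1 : (1:ℝ) ≤ K := by exact_mod_cast hK
  have hsK : 0 ≤ Real.sqrt K := Real.sqrt_nonneg _
  nlinarith [mul_nonneg (mul_nonneg (mul_nonneg hsK hC0) hM0) hT.le]
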